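/- Let Γ4 = x2x3x4 − x2²x5 − x1x4² ∈ ℂ[x1,…,x5] be the Hurwitz determinant for n = 4, i.e., the ratio det(H4)/x5 where H4 is the 4×4 Hurwitz matrix with rows (x2,x4,0,0), (x1,x3,x5,0), (0,x2,x4,0), (0,x1,x3,x5). Then the determinantal surface V(x1x4 − x2x3, x1x5 − x3², x2x5 − x3x4) ⊆ ℂ⁵ (the rank-≤1 locus of the 2×3 matrix with rows (x1,x2,x3) and (x3,x4,x5)) is contained in the dual variety V(Γ4)*, and it is an irreducible component of V(Γ4)*. -/

import Mathlib

open MvPolynomial Pointwise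

/-- Gradient of a multivariate polynomial at a point. -/
noncomputable def grad {n : ℕ} (f : MvPolynomial (Fin n) ℂ) (x : Fin n → ℂ) : Fin n → ℂ :=
  fun i => eval x (pderiv i f)

/-- Zariski closure: zero locus of the ideal of all polynomials vanishing on `S`. -/
def zclosure {σ : Type} (S : Set (σ → ℂ)) : Set (σ → ℂ) :=
  {x | ∀ p : MvPolynomial σ ℂ, (∀ s ∈ S, eval s p = 0) → eval x p = 0}

/-- Zero locus `V(f)`. -/
def Vp {n : ℕ} (f : MvPolynomial (Fin n) ℂ) : Set (Fin n → ℂ) := {x | eval x f = 0}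

/-- Regular locus. -/
def RegL {n : ℕ} (f : MvPolynomial (Fin n) ℂ) : Set (Fin n → ℂ) :=
  {x | eval x f = 0 ∧ grad f x ≠ 0}

/-- Singular locus. -/
def SingL {n : ℕ} (f : MvPolynomial (Fin n) ℂ) : Set (Fin n → ℂ) :=
  {x | eval x f = 0 ∧ grad f x = 0}

/-- ED correspondence: Zariski closure of pairs (u,x), x regular, u - x ∈ ℂ·∇f(x),
encoded as functions on `Fin n ⊕ Fin n`. -/
def EDcorr {n : ℕ} (f : MvPolynomial (Fin n) ℂ) : Set ((Fin n ⊕ Fin n) → ℂ) :=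
  zclosure {w | ∃ u x : Fin n → ℂ, w = Sum.elim u x ∧ x ∈ RegL f ∧ ∃ t : ℂ, u - x = t • grad f x}

/-- ED data singular locus. -/
def DS {n : ℕ} (f : MvPolynomial (Fin n) ℂ) : Set (Fin n → ℂ) :=
  {u | ∃ x, Sum.elim u x ∈ EDcorr f ∧ x ∈ SingL f}

/-- Dual variety. -/
def dualV {n : ℕ} (f : MvPolynomial (Fin n) ℂ) : Set (Fin n → ℂ) :=
  zclosure {y | ∃ (t : ℂ) (x : Fin n → ℂ), x ∈ RegL f ∧ y = t • grad f x}

/-- Isotropic quadric. -/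
def isoQ (n : ℕ) : Set (Fin n → ℂ) := {x | ∑ i, (x i) ^ 2 = 0}

/-- ED data isotropic locus. -/
def DI {n : ℕ} (f : MvPolynomial (Fin n) ℂ) : Set (Fin n → ℂ) :=
  {u | ∃ x, Sum.elim u x ∈ EDcorr f ∧ x ∈ isoQ n ∩ Vp f}

/-- Zariski-closed sets. -/
def IsZClosed {σ : Type} (S : Set (σ → ℂ)) : Prop := zclosure S = S

/-- Irreducibility with respect to Zariski-closed sets. -/
def IsZIrreducible {σ : Type} (S : Set (σ → ℂ)) : Prop :=
  S.Nonempty ∧ ∀ C₁ C₂ : Set (σ → ℂ), IsZClosed C₁ → IsZClosed C₂ →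
    S ⊆ C₁ ∪ C₂ → S ⊆ C₁ ∨ S ⊆ C₂

/-- `C` is an irreducible component of `S`. -/
def IsIrredComponentOf {σ : Type} (C S : Set (σ → ℂ)) : Prop :=
  C ⊆ S ∧ IsZClosed C ∧ IsZIrreducible C ∧
    ∀ C' : Set (σ → ℂ), IsZClosed C' → IsZIrreducible C' → C ⊆ C' → C' ⊆ S → C' = C


/-- The Hurwitz determinant for `n = 4`: `Γ₄ = x₂x₃x₄ - x₂²x₅ - x₁x₄²`. -/
noncomputable def Gamma4 : MvPolynomial (Fin 5) ℂ :=
  X 1 * X 2 * X 3 - X 1 ^ 2 * X 4 - X 0 * X 3 ^ 2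

/-- The determinantal surface `V(x₁x₄ - x₂x₃, x₁x₅ - x₃², x₂x₅ - x₃x₄) ⊆ ℂ⁵`, the rank-≤1
locus of the 2×3 matrix with rows `(x₁,x₂,x₃)` and `(x₃,x₄,x₅)`. -/
def detSurface : Set (Fin 5 → ℂ) :=
  {x | x 0 * x 3 - x 1 * x 2 = 0 ∧ x 0 * x 4 - x 2 ^ 2 = 0 ∧ x 1 * x 4 - x 2 * x 3 = 0}

section HurwitzAux


lemma subset_zclosure {σ : Type} (S : Set (σ → ℂ)) : S ⊆ zclosure S :=
  fun x hx p hp => hp x hx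

lemma eval_bind1 (m : Fin 5 → MvPolynomial (Fin 3) ℂ) (p : MvPolynomial (Fin 5) ℂ) (v : Fin 3 → ℂ) :
    eval v (bind₁ m p) = eval (fun i => eval v (m i)) p := by
  have := aeval_bind₁ (R := ℂ) v m p
  simpa [coe_aeval_eq_eval] using this

lemma grad_Gamma4 (x : Fin 5 → ℂ) :
    grad Gamma4 x = ![-(x 3)^2, x 2 * x 3 - 2*x 1*x 4, x 1 * x 3,
      x 1 * x 2 - 2 * x 0 * x 3, -(x 1)^2] := by
  funext i
  fin_cases i <;> simp [grad, Gamma4, pderiv_X, Pi.single_apply] <;> ring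

lemma eval_Gamma4 (x : Fin 5 → ℂ) :
    eval x Gamma4 = x 1 * x 2 * x 3 - x 1 ^ 2 * x 4 - x 0 * x 3 ^ 2 := by
  simp [Gamma4]

/-- the generating set of the dual variety -/
def S0 : Set (Fin 5 → ℂ) :=
  {y | ∃ (t : ℂ) (x : Fin 5 → ℂ), x ∈ RegL Gamma4 ∧ y = t • grad Gamma4 x}

lemma dualV_eq : dualV Gamma4 = zclosure S0 := rfl

lemma S0_sub_det : S0 ⊆ detSurface := by
  rintro y ⟨t, x, ⟨hx, -⟩, rfl⟩
  rw [eval_Gamma4] at hx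
  rw [grad_Gamma4]
  refine ⟨?_, ?_, ?_⟩ <;>
    simp only [Pi.smul_apply, smul_eq_mul, Matrix.cons_val_zero, Matrix.cons_val_one,
      Matrix.head_cons, Matrix.cons_val_two, Matrix.tail_cons, Matrix.cons_val_three,
      Matrix.cons_val_four]
  · linear_combination (-2 * x 3 * t^2) * hx
  · ring
  · linear_combination (-2 * x 1 * t^2) * hx

lemma det_closed : IsZClosed detSurface := by
  apply Set.eq_of_subset_of_subset _ (subset_zclosure _)
  intro y hy
  refine ⟨?_, ?_, ?_⟩
  · have := hy (X 0 * X 3 - X 1 * X 2) (fun s hs => by simpa using hs.1)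
    simpa using this
  · have := hy (X 0 * X 4 - X 2 ^ 2) (fun s hs => by simpa using hs.2.1)
    simpa using this
  · have := hy (X 1 * X 4 - X 2 * X 3) (fun s hs => by simpa using hs.2.2)
    simpa using this

lemma dual_sub_det : dualV Gamma4 ⊆ detSurface := by
  intro y hy
  refine ⟨?_, ?_, ?_⟩
  · have := hy (X 0 * X 3 - X 1 * X 2) (fun s hs => by simpa using (S0_sub_det hs).1)
    simpa using this
  · have := hy (X 0 * X 4 - X 2 ^ 2) (fun s hs => by simpa using (S0_sub_det hs).2.1)
    simpa using this
  · have := hy (X 1 * X 4 - X 2 * X 3) (fun s hs => by simpa using (S0_sub_det hs).2.2)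
    simpa using this

lemma chart_mem {y : Fin 5 → ℂ} (hy : y ∈ detSurface) (h2 : y 2 ≠ 0) : y ∈ S0 := by
  obtain ⟨h1, hm2, h3⟩ := hy
  have h0 : y 0 ≠ 0 := by
    intro h
    exact h2 (pow_eq_zero_iff (n := 2) (by norm_num) |>.mp (by linear_combination y 4 * h - hm2))
  obtain ⟨s, hs⟩ := IsAlgClosed.exists_pow_nat_eq (-(y 0)) (n := 2) (by norm_num)
  have hsne : s ≠ 0 := by
    intro h
    apply h0
    have h5 : (0:ℂ)^2 = -(y 0) := h ▸ hs
    linear_combination h5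
  refine ⟨1, ![-(y 3)/(2*s), y 2 / s, 0, s, -(y 1)*s/(2*(y 2))], ⟨?_, ?_⟩, ?_⟩
  · rw [eval_Gamma4]
    show (y 2 / s) * 0 * s - (y 2 / s)^2 * (-(y 1)*s/(2*(y 2))) - (-(y 3)/(2*s)) * s^2 = 0
    field_simp
    linear_combination -h1 + y 3 * hs
  · rw [grad_Gamma4]
    intro h
    apply h0
    have h5 : -s^2 = (0:ℂ) := congrFun h 0
    linear_combination h5 + hs
  · rw [grad_Gamma4, one_smul]
    funext i
    fin_cases i
    · show y 0 = -s^2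
      linear_combination hs
    · show y 1 = 0 * s - 2 * (y 2/s) * (-(y 1)*s/(2*(y 2)))
      field_simp
      try ring
    · show y 2 = (y 2/s) * s
      field_simp
    · show y 3 = (y 2/s) * 0 - 2 * (-(y 3)/(2*s)) * s
      field_simp
      try ring
    · show y 4 = -(y 2/s)^2
      field_simp
      linear_combination -hm2 + y 4 * hs

/-- first chart parametrization -/
def phiF (v : Fin 3 → ℂ) : Fin 5 → ℂ := ![v 0, v 1, v 2 * v 0, v 2 * v 1, v 2 ^ 2 * v 0]

/-- second chart parametrization -/
def psiF (v : Fin 3 → ℂ) : Fin 5 → ℂ := ![v 2 ^ 2 * v 0, v 2 * v 1, v 2 * v 0, v 1, v 0]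

noncomputable def phiM : Fin 5 → MvPolynomial (Fin 3) ℂ :=
  ![X 0, X 1, X 2 * X 0, X 2 * X 1, X 2 ^ 2 * X 0]

noncomputable def psiM : Fin 5 → MvPolynomial (Fin 3) ℂ :=
  ![X 2 ^ 2 * X 0, X 2 * X 1, X 2 * X 0, X 1, X 0]

lemma eval_phiM (p : MvPolynomial (Fin 5) ℂ) (v : Fin 3 → ℂ) :
    eval v (bind₁ phiM p) = eval (phiF v) p := by
  rw [eval_bind1]
  have hv : (fun i => eval v (phiM i)) = phiF v := by
    funext i; fin_cases i <;> simp [phiM, phiF]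
  rw [hv]

lemma eval_psiM (p : MvPolynomial (Fin 5) ℂ) (v : Fin 3 → ℂ) :
    eval v (bind₁ psiM p) = eval (psiF v) p := by
  rw [eval_bind1]
  have hv : (fun i => eval v (psiM i)) = psiF v := by
    funext i; fin_cases i <;> simp [psiM, psiF]
  rw [hv]

lemma phiF_mem (v : Fin 3 → ℂ) : phiF v ∈ detSurface := by
  refine ⟨?_, ?_, ?_⟩ <;> simp [phiF] <;> ring

lemma psiF_mem (v : Fin 3 → ℂ) : psiF v ∈ detSurface := by
  refine ⟨?_, ?_, ?_⟩ <;> simp [psiF] <;> ring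

/-- a polynomial on ℂ³ vanishing wherever g ≠ 0 vanishes identically -/
lemma zero3' (g q : MvPolynomial (Fin 3) ℂ) (hg : g ≠ 0)
    (h : ∀ v : Fin 3 → ℂ, eval v g ≠ 0 → eval v q = 0) : q = 0 := by
  have hgq : g * q = 0 := by
    apply MvPolynomial.funext
    intro v
    rw [map_mul, map_zero]
    rcases eq_or_ne (eval v g) 0 with h0 | h0
    · rw [h0, zero_mul]
    · rw [h v h0, mul_zero]
  exact (mul_eq_zero.mp hgq).resolve_left hg

lemma zero3 (q : MvPolynomial (Fin 3) ℂ) (h : ∀ v : Fin 3 → ℂ, eval v q = 0) : q = 0 :=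
  MvPolynomial.funext (by simpa using h)

/-- if p vanishes on the chart y₂ ≠ 0 of detSurface, it vanishes on both parametrizations -/
lemma vanish_param (p : MvPolynomial (Fin 5) ℂ)
    (h : ∀ y ∈ detSurface, y 2 ≠ 0 → eval y p = 0) :
    (∀ v, eval (phiF v) p = 0) ∧ (∀ v, eval (psiF v) p = 0) := by
  constructor
  · intro v
    rw [← eval_phiM]
    rw [zero3' (X 0 * X 2) (bind₁ phiM p) (mul_ne_zero (X_ne_zero _) (X_ne_zero _)) ?_]
    · simp
    · intro w hw
      simp only [map_mul, eval_X] at hw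
      rw [eval_phiM]
      refine h _ (phiF_mem w) ?_
      show w 2 * w 0 ≠ 0
      intro hc
      exact hw (by linear_combination hc)
  · intro v
    rw [← eval_psiM]
    rw [zero3' (X 0 * X 2) (bind₁ psiM p) (mul_ne_zero (X_ne_zero _) (X_ne_zero _)) ?_]
    · simp
    · intro w hw
      simp only [map_mul, eval_X] at hw
      rw [eval_psiM]
      refine h _ (psiF_mem w) ?_
      show w 2 * w 0 ≠ 0
      intro hc
      exact hw (by linear_combination hc)

lemma chart_in_phi {y : Fin 5 → ℂ} (hy : y ∈ detSurface) (h0 : y 0 ≠ 0) :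
    y = phiF ![y 0, y 1, y 2 / y 0] := by
  obtain ⟨h1, hm2, h3⟩ := hy
  funext i
  fin_cases i
  · rfl
  · rfl
  · show y 2 = y 2 / y 0 * y 0
    field_simp
  · show y 3 = y 2 / y 0 * y 1
    field_simp
    linear_combination h1
  · show y 4 = (y 2 / y 0) ^ 2 * y 0
    field_simp
    linear_combination hm2

lemma cover {y : Fin 5 → ℂ} (hy : y ∈ detSurface) :
    (∃ v, y = phiF v) ∨ (∃ v, y = psiF v) := by
  obtain ⟨h1, hm2, h3⟩ := hy
  rcases eq_or_ne (y 0) 0 with h0 | h0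
  · have h2 : y 2 = 0 := by
      refine pow_eq_zero_iff (n := 2) (by norm_num) |>.mp ?_
      linear_combination y 4 * h0 - hm2
    rcases eq_or_ne (y 4) 0 with h4 | h4
    · rcases eq_or_ne (y 1) 0 with hy1 | hy1
      · right
        refine ⟨![0, y 3, 0], ?_⟩
        funext i
        fin_cases i <;> simp [psiF, h0, h2, h4, hy1]
      · left
        refine ⟨![0, y 1, y 3 / y 1], ?_⟩
        funext i
        fin_cases i
        · exact h0
        · rfl
        · show y 2 = y 3 / y 1 * 0; simp [h2]
        · show y 3 = y 3 / y 1 * y 1; field_simp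
        · show y 4 = (y 3 / y 1) ^ 2 * 0; simp [h4]
    · have hy1 : y 1 = 0 := by
        have : y 1 * y 4 = 0 := by linear_combination h3 + y 3 * h2
        exact (mul_eq_zero.mp this).resolve_right h4
      right
      refine ⟨![y 4, y 3, 0], ?_⟩
      funext i
      fin_cases i <;> simp [psiF, h0, h2, hy1]
  · exact Or.inl ⟨_, chart_in_phi ⟨h1, hm2, h3⟩ h0⟩

lemma vanish_det (p : MvPolynomial (Fin 5) ℂ)
    (h : ∀ y ∈ detSurface, y 2 ≠ 0 → eval y p = 0) :
    ∀ y ∈ detSurface, eval y p = 0 := by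
  intro y hy
  obtain ⟨hphi, hpsi⟩ := vanish_param p h
  rcases cover hy with ⟨v, rfl⟩ | ⟨v, rfl⟩
  · exact hphi v
  · exact hpsi v

lemma det_sub_dual : detSurface ⊆ dualV Gamma4 := by
  intro y hy p hp
  exact vanish_det p (fun z hz h2 => hp z (chart_mem hz h2)) y hy

lemma phi_in_closed {C : Set (Fin 5 → ℂ)} (hC : IsZClosed C)
    (hphi : ∀ v, phiF v ∈ C) : detSurface ⊆ C := by
  intro y hy
  rw [← hC]
  intro p hp
  refine vanish_det p (fun z hz h2 => ?_) y hy
  have h0 : z 0 ≠ 0 := by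
    intro h
    refine h2 (pow_eq_zero_iff (n := 2) (by norm_num) |>.mp ?_)
    linear_combination z 4 * h - hz.2.1
  rw [chart_in_phi hz h0]
  exact hp _ (hphi _)

lemma not_mem_closed {C : Set (Fin 5 → ℂ)} (hC : IsZClosed C) {y : Fin 5 → ℂ}
    (hy : y ∉ C) : ∃ p : MvPolynomial (Fin 5) ℂ,
      (∀ s ∈ C, eval s p = 0) ∧ eval y p ≠ 0 := by
  rw [← hC] at hy
  simpa [zclosure] using hy

lemma det_irred : IsZIrreducible detSurface := by
  constructor
  · exact ⟨0, by simp [detSurface]⟩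
  · intro C₁ C₂ hC₁ hC₂ hsub
    have key : (∀ v, phiF v ∈ C₁) ∨ (∀ v, phiF v ∈ C₂) := by
      by_contra hc
      push_neg at hc
      obtain ⟨⟨v₁, hv₁⟩, v₂, hv₂⟩ := hc
      obtain ⟨p₁, hp₁, he₁⟩ := not_mem_closed hC₁ hv₁
      obtain ⟨p₂, hp₂, he₂⟩ := not_mem_closed hC₂ hv₂
      have hq₁ : bind₁ phiM p₁ ≠ 0 := by
        intro h
        apply he₁
        rw [← eval_phiM, h, map_zero]
      have hq₂ : bind₁ phiM p₂ ≠ 0 := by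
        intro h
        apply he₂
        rw [← eval_phiM, h, map_zero]
      have hq : bind₁ phiM p₁ * bind₁ phiM p₂ ≠ 0 := mul_ne_zero hq₁ hq₂
      have : ∃ w : Fin 3 → ℂ, eval w (bind₁ phiM p₁ * bind₁ phiM p₂) ≠ 0 := by
        by_contra hcc
        push_neg at hcc
        exact hq (zero3 _ hcc)
      obtain ⟨w, hw⟩ := this
      rw [map_mul] at hw
      have hw₁ : eval (phiF w) p₁ ≠ 0 := by
        rw [← eval_phiM]; exact fun h => hw (by rw [h, zero_mul])
      have hw₂ : eval (phiF w) p₂ ≠ 0 := by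
        rw [← eval_phiM]; exact fun h => hw (by rw [h, mul_zero])
      rcases hsub (phiF_mem w) with h | h
      · exact hw₁ (hp₁ _ h)
      · exact hw₂ (hp₂ _ h)
    rcases key with h | h
    · exact Or.inl (phi_in_closed hC₁ h)
    · exact Or.inr (phi_in_closed hC₂ h)


end HurwitzAux

/-- The determinantal surface `V(x₁x₄ - x₂x₃, x₁x₅ - x₃², x₂x₅ - x₃x₄)` is contained in the
dual variety of the Hurwitz hypersurface `V(Γ₄)` and is an irreducible component of it. -/
theorem hurwitz_dual_component :
    detSurface ⊆ dualV Gamma4 ∧ IsIrredComponentOf detSurface (dualV Gamma4) := by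
  refine ⟨det_sub_dual, det_sub_dual, det_closed, det_irred, ?_⟩
  intro C' hC' hirr hsub hsub'
  exact Set.Subset.antisymm (hsub'.trans dual_sub_det) hsub
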